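/- Let k be an infinite field, let B be a standard graded artinian k-algebra, let d ≥ 1 and A = B ⊗_k k[x]/(x^d). Then A has the weak Lefschetz property if and only if there exists a linear form ℓ ∈ B₁ such that the multiplication map ·ℓ^d : B_i → B_{i+d} has full rank for every i ≥ 0. -/

import Mathlib

open scoped BigOperators

/-- Multiplication by `a` is injective as a map on the subspace `V`. -/
def MulInjOn {k R : Type*} [Field k] [CommRing R] [Algebra k R]
    (V : Submodule k R) (a : R) : Prop :=
  ∀ v ∈ V, a * v = 0 → v = 0

/-- Multiplication by `a` maps the subspace `V` onto the subspace `W`. -/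
def MulSurjOnto {k R : Type*} [Field k] [CommRing R] [Algebra k R]
    (V W : Submodule k R) (a : R) : Prop :=
  ∀ w ∈ W, ∃ v ∈ V, a * v = w

/-- The multiplication map `·a : V → W` has full rank: it is injective or surjective. -/
def MulFullRank {k R : Type*} [Field k] [CommRing R] [Algebra k R]
    (V W : Submodule k R) (a : R) : Prop :=
  MulInjOn V a ∨ MulSurjOnto V W a

/-- `𝒜` is the grading of a standard graded artinian `k`-algebra structure on `R`:
the components form an internal direct sum, vanish in negative degrees, are
multiplicative, the degree-zero part is spanned by `1`, the algebra is generated in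
degree one, and `R` is a finite-dimensional `k`-vector space (equivalently, artinian). -/
structure IsStdGradedArtinian (k : Type*) [Field k] (R : Type*) [CommRing R] [Algebra k R]
    (𝒜 : ℤ → Submodule k R) : Prop where
  internal : DirectSum.IsInternal 𝒜
  one_mem : (1 : R) ∈ 𝒜 0
  mul_mem : ∀ {i j : ℤ} {a b : R}, a ∈ 𝒜 i → b ∈ 𝒜 j → a * b ∈ 𝒜 (i + j)
  neg_bot : ∀ i : ℤ, i < 0 → 𝒜 i = ⊥
  zero_spanOne : 𝒜 0 = Submodule.span k {(1 : R)}
  succ_eq : ∀ i : ℤ, 0 ≤ i → 𝒜 (i + 1) = 𝒜 1 * 𝒜 i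
  finiteDim : FiniteDimensional k R

/-- `A` (graded by `ℬ`) is the extension `B ⊗ₖ k[x]/(x^d)` of `B` (graded by `𝒜`):
`φ` is the canonical inclusion of `B`, `x` has degree one with `x^d = 0`, and each
graded component decomposes as `ℬ j = ⊕_{q=0}^{d-1} x^q · φ(𝒜 (j - q))`. -/
structure IsCIExtension {k B A : Type*} [Field k] [CommRing B] [Algebra k B]
    [CommRing A] [Algebra k A]
    (𝒜 : ℤ → Submodule k B) (ℬ : ℤ → Submodule k A)
    (φ : B →ₐ[k] A) (x : A) (d : ℕ) : Prop where
  map_mem : ∀ (j : ℤ) (b : B), b ∈ 𝒜 j → φ b ∈ ℬ j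
  x_mem : x ∈ ℬ 1
  x_pow : x ^ d = 0
  decomp_mem : ∀ (j : ℤ) (f : Fin d → B), (∀ q : Fin d, f q ∈ 𝒜 (j - ((q : ℕ) : ℤ))) →
    (∑ q : Fin d, x ^ (q : ℕ) * φ (f q)) ∈ ℬ j
  decomp_exists : ∀ (j : ℤ), ∀ c ∈ ℬ j, ∃ f : Fin d → B,
    (∀ q : Fin d, f q ∈ 𝒜 (j - ((q : ℕ) : ℤ))) ∧ c = ∑ q : Fin d, x ^ (q : ℕ) * φ (f q)
  decomp_unique : ∀ (j : ℤ) (f : Fin d → B), (∀ q : Fin d, f q ∈ 𝒜 (j - ((q : ℕ) : ℤ))) →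
    (∑ q : Fin d, x ^ (q : ℕ) * φ (f q)) = 0 → ∀ q : Fin d, f q = 0

/-- `A` (graded by `ℬ`) is the extension `B ⊗ₖ k[x₁,…,xₙ]/(x₁^{d₁},…,xₙ^{dₙ})` of `B`
(graded by `𝒜`). -/
structure IsMultiCIExtension {k B A : Type*} [Field k] [CommRing B] [Algebra k B]
    [CommRing A] [Algebra k A] {n : ℕ}
    (𝒜 : ℤ → Submodule k B) (ℬ : ℤ → Submodule k A)
    (φ : B →ₐ[k] A) (x : Fin n → A) (dv : Fin n → ℕ) : Prop where
  map_mem : ∀ (j : ℤ) (b : B), b ∈ 𝒜 j → φ b ∈ ℬ j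
  x_mem : ∀ m : Fin n, x m ∈ ℬ 1
  x_pow : ∀ m : Fin n, x m ^ dv m = 0
  decomp_mem : ∀ (j : ℤ) (f : ((m : Fin n) → Fin (dv m)) → B),
    (∀ e, f e ∈ 𝒜 (j - ∑ m : Fin n, ((e m : ℕ) : ℤ))) →
    (∑ e : (m : Fin n) → Fin (dv m), (∏ m : Fin n, x m ^ ((e m : ℕ))) * φ (f e)) ∈ ℬ j
  decomp_exists : ∀ (j : ℤ), ∀ c ∈ ℬ j, ∃ f : ((m : Fin n) → Fin (dv m)) → B,
    (∀ e, f e ∈ 𝒜 (j - ∑ m : Fin n, ((e m : ℕ) : ℤ))) ∧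
    c = ∑ e : (m : Fin n) → Fin (dv m), (∏ m : Fin n, x m ^ ((e m : ℕ))) * φ (f e)
  decomp_unique : ∀ (j : ℤ) (f : ((m : Fin n) → Fin (dv m)) → B),
    (∀ e, f e ∈ 𝒜 (j - ∑ m : Fin n, ((e m : ℕ) : ℤ))) →
    (∑ e : (m : Fin n) → Fin (dv m), (∏ m : Fin n, x m ^ ((e m : ℕ))) * φ (f e)) = 0 →
    ∀ e, f e = 0

/-- The weak Lefschetz property. -/
def HasWLP {k R : Type*} [Field k] [CommRing R] [Algebra k R]
    (𝒜 : ℤ → Submodule k R) : Prop :=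
  ∃ ℓ ∈ 𝒜 1, ∀ i : ℤ, 0 ≤ i → MulFullRank (𝒜 i) (𝒜 (i + 1)) ℓ

/-- The strong Lefschetz property. -/
def HasSLP {k R : Type*} [Field k] [CommRing R] [Algebra k R]
    (𝒜 : ℤ → Submodule k R) : Prop :=
  ∃ ℓ ∈ 𝒜 1, ∀ i : ℤ, 0 ≤ i → ∀ t : ℕ, 1 ≤ t → MulFullRank (𝒜 i) (𝒜 (i + t)) (ℓ ^ t)

/-- The Hilbert function of the graded algebra. -/
noncomputable def hilb {k R : Type*} [Field k] [CommRing R] [Algebra k R]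
    (𝒜 : ℤ → Submodule k R) (i : ℤ) : ℕ :=
  Module.finrank k (𝒜 i)

/-- The algebra is almost centered. -/
def AlmostCentered {k R : Type*} [Field k] [CommRing R] [Algebra k R]
    (𝒜 : ℤ → Submodule k R) : Prop :=
  ∀ i j : ℤ, i < j →
    (hilb 𝒜 i < hilb 𝒜 j → ∀ s : ℕ, hilb 𝒜 (i - s) ≤ hilb 𝒜 (j + s)) ∧
    (hilb 𝒜 j < hilb 𝒜 i → ∀ s : ℕ, hilb 𝒜 (j + s) ≤ hilb 𝒜 (i - s))

/-- `binomZ t j` is the binomial coefficient `t` choose `j` for an integer `j`,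
equal to `0` for `j < 0` or `j > t`. -/
def binomZ (t : ℕ) (j : ℤ) : ℤ := if 0 ≤ j then (t.choose j.toNat : ℤ) else 0

/-- The `(d-p) × (d-p)` integer matrix `C_{t,p,d}` whose `(r,c)` entry (with `1 ≤ r,c ≤ d-p`)
is `binom(t, d+1-r-c)`. -/
def Cmat (t p d : ℕ) : Matrix (Fin (d - p)) (Fin (d - p)) ℤ :=
  Matrix.of fun r c => binomZ t ((d : ℤ) - 1 - (r : ℕ) - (c : ℕ))

/-- The characteristic of `k` is zero, or a prime not dividing the integer `N`. -/
def CharCond (k : Type*) [Field k] (N : ℤ) : Prop :=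
  CharZero k ∨ ∃ p : ℕ, p.Prime ∧ CharP k p ∧ ¬ ((p : ℤ) ∣ N)

section Aux

variable {k B A : Type} [Field k] [CommRing B] [Algebra k B] [CommRing A] [Algebra k A]

/-- Shift of a `Fin d`-indexed family: `shf f q = f (q-1)`, with `shf f 0 = 0`. -/
def shf {B : Type*} [CommRing B] {d : ℕ} (f : Fin d → B) : Fin d → B :=
  fun q => if h : (q : ℕ) = 0 then 0 else
    f ⟨(q : ℕ) - 1, Nat.lt_of_le_of_lt (Nat.sub_le _ _) q.2⟩

lemma mem_of_idx_eq {𝒜 : ℤ → Submodule k B} {i j : ℤ} (h : i = j) {v : B}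
    (hv : v ∈ 𝒜 i) : v ∈ 𝒜 j := h ▸ hv

lemma key_mul {d : ℕ} (hd : 1 ≤ d) (φ : B →ₐ[k] A) (x : A) (hx : x ^ d = 0)
    (ℓ : B) (f : Fin d → B) :
    (φ ℓ + x) * ∑ q : Fin d, x ^ (q : ℕ) * φ (f q)
      = ∑ q : Fin d, x ^ (q : ℕ) * φ (ℓ * f q + shf f q) := by
  classical
  obtain ⟨n, rfl⟩ : ∃ n, d = n + 1 := ⟨d - 1, by omega⟩
  set fN : ℕ → B := fun q => if h : q < n + 1 then f ⟨q, h⟩ else 0 with hfN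
  have e1 : ∑ q : Fin (n+1), x ^ (q : ℕ) * φ (f q)
      = ∑ q ∈ Finset.range (n+1), x ^ q * φ (fN q) := by
    rw [← Fin.sum_univ_eq_sum_range]
    refine Finset.sum_congr rfl fun q _ => ?_
    simp [hfN, q.2, Nat.le_of_lt_succ q.2]
  have e2 : ∑ q : Fin (n+1), x ^ (q : ℕ) * φ (ℓ * f q + shf f q)
      = ∑ q ∈ Finset.range (n+1), x ^ q *
          φ (ℓ * fN q + if q = 0 then 0 else fN (q - 1)) := by
    rw [← Fin.sum_univ_eq_sum_range]
    refine Finset.sum_congr rfl fun q _ => ?_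
    have hf1 : fN (q : ℕ) = f q := by simp [hfN, q.2, Nat.le_of_lt_succ q.2]
    have hf2 : (if (q : ℕ) = 0 then 0 else fN ((q : ℕ) - 1)) = shf f q := by
      by_cases h0 : (q : ℕ) = 0
      · unfold shf; rw [dif_pos h0, if_pos h0]
      · have h1 : (q : ℕ) - 1 < n + 1 := Nat.lt_of_le_of_lt (Nat.sub_le _ _) q.2
        unfold shf; rw [dif_neg h0, if_neg h0]; simp [hfN, h1]
    rw [hf1, hf2]
  rw [e1, e2]
  have expand : ∑ q ∈ Finset.range (n+1), x ^ q *
      φ (ℓ * fN q + if q = 0 then 0 else fN (q - 1))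
      = (∑ q ∈ Finset.range (n+1), x ^ q * φ (ℓ * fN q))
        + ∑ q ∈ Finset.range (n+1), x ^ q * φ (if q = 0 then 0 else fN (q - 1)) := by
    rw [← Finset.sum_add_distrib]
    refine Finset.sum_congr rfl fun q _ => ?_
    rw [map_add, mul_add]
  rw [expand, add_mul]
  congr 1
  · rw [Finset.mul_sum]
    refine Finset.sum_congr rfl fun q _ => ?_
    rw [map_mul]; ring
  · rw [Finset.mul_sum]
    have lhs : ∑ q ∈ Finset.range (n+1), x * (x ^ q * φ (fN q))
        = ∑ q ∈ Finset.range n, x ^ (q+1) * φ (fN q) := by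
      rw [Finset.sum_range_succ]
      have : x * (x ^ n * φ (fN n)) = 0 := by
        rw [← mul_assoc, ← pow_succ']; rw [hx]; ring
      rw [this, add_zero]
      refine Finset.sum_congr rfl fun q _ => ?_
      rw [← mul_assoc, ← pow_succ']
    have rhs : ∑ q ∈ Finset.range (n+1), x ^ q * φ (if q = 0 then 0 else fN (q - 1))
        = ∑ q ∈ Finset.range n, x ^ (q+1) * φ (fN q) := by
      rw [Finset.sum_range_succ']
      simp only [Nat.add_sub_cancel, if_neg (Nat.succ_ne_zero _), if_pos rfl]
      simp
    rw [lhs, rhs]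

lemma pow_mem' {𝒜 : ℤ → Submodule k B} (hB : IsStdGradedArtinian k B 𝒜)
    {ℓ : B} (hℓ : ℓ ∈ 𝒜 1) : ∀ m : ℕ, ℓ ^ m ∈ 𝒜 (m : ℤ) := by
  intro m
  induction m with
  | zero => simpa using hB.one_mem
  | succ m ih =>
      have := hB.mul_mem ih hℓ
      rw [pow_succ]
      exact mem_of_idx_eq (by push_cast; ring) this

lemma mul_pow_mem {𝒜 : ℤ → Submodule k B} (hB : IsStdGradedArtinian k B 𝒜)
    {ℓ v : B} {j : ℤ} (hℓ : ℓ ∈ 𝒜 1) (hv : v ∈ 𝒜 j) (m : ℕ) :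
    ℓ ^ m * v ∈ 𝒜 ((m : ℤ) + j) :=
  hB.mul_mem (pow_mem' hB hℓ m) hv

lemma fin_congr {d : ℕ} (f : Fin d → B) {a b : ℕ} (ha : a < d) (hb : b < d)
    (h : a = b) : f ⟨a, ha⟩ = f ⟨b, hb⟩ := by subst h; rfl

/-- Downward recursion: if `ℓ * f q + f (q-1) = 0` for all `q ≠ 0`, then
`f (d-1-m) = (-ℓ)^m * f (d-1)`. -/
lemma downward {d : ℕ} (ℓ : B) (f : Fin d → B)
    (hrel : ∀ q : Fin d, (q : ℕ) ≠ 0 → ℓ * f q + shf f q = 0) :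
    ∀ m : ℕ, (hm : m < d) → f ⟨d - 1 - m, by omega⟩ = (-ℓ) ^ m * f ⟨d - 1, by omega⟩ := by
  intro m
  induction m with
  | zero => intro hm; rw [pow_zero, one_mul]; exact fin_congr f _ _ (by omega)
  | succ m ih =>
      intro hm
      have hm' : m < d := by omega
      have ihm := ih hm'
      set q : Fin d := ⟨d - 1 - m, by omega⟩ with hq
      have hq0 : (q : ℕ) ≠ 0 := by simp [hq]; omega
      have hr := hrel q hq0
      have hshf : shf f q = f ⟨d - 1 - (m + 1), by omega⟩ := by
        unfold shf
        rw [dif_neg hq0]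
        exact fin_congr f _ _ (by simp [hq]; omega)
      rw [hshf] at hr
      have h2 : f ⟨d - 1 - (m + 1), by omega⟩ = -(ℓ * f q) :=
        eq_neg_of_add_eq_zero_right hr
      rw [h2, ihm, pow_succ]
      ring
  
lemma downward_all {d : ℕ} (hd : 1 ≤ d) (ℓ : B) (f : Fin d → B)
    (hrel : ∀ q : Fin d, (q : ℕ) ≠ 0 → ℓ * f q + shf f q = 0) (q : Fin d) :
    f q = (-ℓ) ^ (d - 1 - (q : ℕ)) * f ⟨d - 1, by omega⟩ := by
  have h := downward ℓ f hrel (d - 1 - (q : ℕ)) (by omega)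
  have hq : d - 1 - (d - 1 - (q : ℕ)) = (q : ℕ) := by have := q.2; omega
  rw [← h]
  exact fin_congr f q.2 (by omega) hq.symm

lemma phi_mul {d : ℕ} (φ : B →ₐ[k] A) (x : A) (ℓ : B) (f : Fin d → B) :
    φ ℓ * ∑ q : Fin d, x ^ (q : ℕ) * φ (f q)
      = ∑ q : Fin d, x ^ (q : ℕ) * φ (ℓ * f q) := by
  rw [Finset.mul_sum]
  refine Finset.sum_congr rfl fun q _ => ?_
  rw [map_mul]; ring

lemma neg_one_pow_mem {𝒜 : ℤ → Submodule k B} {j : ℤ} {v : B} (hv : v ∈ 𝒜 j) (m : ℕ) :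
    (-1 : B) ^ m * v ∈ 𝒜 j := by
  rcases Nat.even_or_odd m with he | ho
  · rw [he.neg_one_pow, one_mul]; exact hv
  · rw [ho.neg_one_pow, neg_one_mul]; exact neg_mem hv

lemma inj_smul {V : Submodule k A} {a : A} {c : k} (hc : c ≠ 0)
    (h : MulInjOn V a) : MulInjOn V (c • a) := by
  intro v hv hcv
  apply h v hv
  rw [smul_mul_assoc] at hcv
  exact (smul_eq_zero.mp hcv).resolve_left hc

lemma surj_smul {V W : Submodule k A} {a : A} {c : k} (hc : c ≠ 0)
    (h : MulSurjOnto V W a) : MulSurjOnto V W (c • a) := by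
  intro w hw
  obtain ⟨v, hv, hav⟩ := h w hw
  refine ⟨c⁻¹ • v, V.smul_mem _ hv, ?_⟩
  rw [smul_mul_smul_comm, mul_inv_cancel₀ hc, one_smul, hav]

lemma fullrank_smul {V W : Submodule k A} {a : A} {c : k} (hc : c ≠ 0)
    (h : MulFullRank V W a) : MulFullRank V W (c • a) :=
  h.imp (inj_smul hc) (surj_smul hc)

variable {𝒜 : ℤ → Submodule k B} {ℬ : ℤ → Submodule k A} {φ : B →ₐ[k] A} {x : A} {d : ℕ}

lemma shf_memG (hB : IsStdGradedArtinian k B 𝒜) {ℓ : B} (hℓ : ℓ ∈ 𝒜 1) {i : ℤ}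
    {f : Fin d → B} (hf : ∀ q : Fin d, f q ∈ 𝒜 (i - ((q : ℕ) : ℤ))) :
    ∀ q : Fin d, ℓ * f q + shf f q ∈ 𝒜 (i + 1 - ((q : ℕ) : ℤ)) := by
  intro q
  refine add_mem (mem_of_idx_eq (by ring) (hB.mul_mem hℓ (hf q))) ?_
  unfold shf
  by_cases h0 : (q : ℕ) = 0
  · rw [dif_pos h0]; exact zero_mem _
  · rw [dif_neg h0]
    refine mem_of_idx_eq ?_ (hf ⟨(q : ℕ) - 1, Nat.lt_of_le_of_lt (Nat.sub_le _ _) q.2⟩)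
    have h1 : (((q : ℕ) - 1 : ℕ) : ℤ) = ((q : ℕ) : ℤ) - 1 := by omega
    rw [h1]; ring

lemma lem_a (hB : IsStdGradedArtinian k B 𝒜) (hext : IsCIExtension 𝒜 ℬ φ x d)
    (hd : 1 ≤ d) {ℓ : B} (hℓ : ℓ ∈ 𝒜 1) (i : ℤ)
    (h : MulInjOn (𝒜 (i + 1 - d)) (ℓ ^ d)) :
    MulInjOn (ℬ i) (φ ℓ + x) := by
  obtain ⟨n, rfl⟩ : ∃ n, d = n + 1 := ⟨d - 1, by omega⟩
  intro v hv hLv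
  obtain ⟨f, hf, rfl⟩ := hext.decomp_exists i v hv
  rw [key_mul hd φ x hext.x_pow] at hLv
  have hz := hext.decomp_unique (i + 1) _ (shf_memG hB hℓ hf) hLv
  have hrel : ∀ q : Fin (n+1), (q : ℕ) ≠ 0 → ℓ * f q + shf f q = 0 := fun q _ => hz q
  have hall := downward_all hd ℓ f hrel
  simp only [Nat.add_sub_cancel] at hall
  have hfdz : f ⟨n, by omega⟩ = 0 := by
    have h0 := hz ⟨0, by omega⟩
    have hsh0 : shf f ⟨0, by omega⟩ = 0 := by unfold shf; rw [dif_pos rfl]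
    rw [hsh0, add_zero] at h0
    have h00 := hall ⟨0, by omega⟩
    simp only [Nat.sub_zero] at h00
    rw [h00] at h0
    have hpow : ℓ ^ (n + 1) * f ⟨n, by omega⟩ = 0 := by
      rcases Nat.even_or_odd n with he | ho
      · rw [he.neg_pow] at h0
        rw [pow_succ', mul_assoc]
        exact h0
      · rw [ho.neg_pow] at h0
        rw [pow_succ']
        linear_combination (-1 : B) * h0
    have hmem : f ⟨n, by omega⟩ ∈ 𝒜 (i + 1 - ((n + 1 : ℕ) : ℤ)) := by
      refine mem_of_idx_eq ?_ (hf ⟨n, by omega⟩)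
      push_cast; ring
    exact h _ hmem hpow
  apply Finset.sum_eq_zero
  intro q _
  rw [hall q, hfdz, mul_zero, map_zero, mul_zero]

lemma lem_c (hB : IsStdGradedArtinian k B 𝒜) (hext : IsCIExtension 𝒜 ℬ φ x d)
    (hd : 1 ≤ d) {ℓ : B} (hℓ : ℓ ∈ 𝒜 1) (i : ℤ)
    (h : MulInjOn (ℬ i) (φ ℓ + x)) :
    MulInjOn (𝒜 (i + 1 - d)) (ℓ ^ d) := by
  obtain ⟨n, rfl⟩ : ∃ n, d = n + 1 := ⟨d - 1, by omega⟩
  intro v hv hv0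
  set f : Fin (n+1) → B := fun q => (-ℓ) ^ (n - (q : ℕ)) * v with hfdef
  have hf : ∀ q : Fin (n+1), f q ∈ 𝒜 (i - ((q : ℕ) : ℤ)) := by
    intro q
    have := mul_pow_mem hB (neg_mem hℓ) hv (n - (q : ℕ))
    refine mem_of_idx_eq ?_ this
    have hq := q.2
    omega
  have hw := hext.decomp_mem i f hf
  have hLw : (φ ℓ + x) * ∑ q : Fin (n+1), x ^ (q : ℕ) * φ (f q) = 0 := by
    rw [key_mul hd φ x hext.x_pow]
    apply Finset.sum_eq_zero
    intro q _
    suffices hs : ℓ * f q + shf f q = 0 by rw [hs, map_zero, mul_zero]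
    by_cases h0 : (q : ℕ) = 0
    · unfold shf
      rw [dif_pos h0]
      simp only [hfdef, h0, Nat.sub_zero, add_zero]
      rcases Nat.even_or_odd n with he | ho
      · rw [he.neg_pow]
        calc ℓ * (ℓ ^ n * v) = ℓ ^ (n+1) * v := by rw [pow_succ']; ring
        _ = 0 := hv0
      · rw [ho.neg_pow]
        have : ℓ ^ (n+1) * v = 0 := hv0
        rw [pow_succ'] at this
        linear_combination (-1 : B) * this
    · unfold shf
      rw [dif_neg h0]
      simp only [hfdef]
      have he1 : n - ((q : ℕ) - 1) = (n - (q : ℕ)) + 1 := by have := q.2; omega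
      rw [he1, pow_succ]
      ring
  have hw0 := h _ hw hLw
  have := hext.decomp_unique i f hf hw0 ⟨n, by omega⟩
  simp only [hfdef, Nat.sub_self, pow_zero, one_mul] at this
  exact this

lemma lem_d (hB : IsStdGradedArtinian k B 𝒜) (hext : IsCIExtension 𝒜 ℬ φ x d)
    (hd : 1 ≤ d) {ℓ : B} (hℓ : ℓ ∈ 𝒜 1) (i : ℤ)
    (h : MulSurjOnto (ℬ i) (ℬ (i + 1)) (φ ℓ + x)) :
    MulSurjOnto (𝒜 (i + 1 - d)) (𝒜 (i + 1)) (ℓ ^ d) := by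
  obtain ⟨n, rfl⟩ : ∃ n, d = n + 1 := ⟨d - 1, by omega⟩
  intro w hw
  obtain ⟨v, hv, hLv⟩ := h (φ w) (hext.map_mem _ _ hw)
  obtain ⟨f, hf, rfl⟩ := hext.decomp_exists i v hv
  rw [key_mul hd φ x hext.x_pow] at hLv
  -- turn into a zero-sum statement
  set g : Fin (n+1) → B := fun q => (ℓ * f q + shf f q) - (if (q : ℕ) = 0 then w else 0)
    with hgdef
  have hgmem : ∀ q : Fin (n+1), g q ∈ 𝒜 (i + 1 - ((q : ℕ) : ℤ)) := by
    intro q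
    refine sub_mem (shf_memG hB hℓ hf q) ?_
    by_cases h0 : (q : ℕ) = 0
    · rw [if_pos h0]; exact mem_of_idx_eq (by rw [h0]; push_cast; ring) hw
    · rw [if_neg h0]; exact zero_mem _
  have hgsum : ∑ q : Fin (n+1), x ^ (q : ℕ) * φ (g q) = 0 := by
    have hsplit : ∑ q : Fin (n+1), x ^ (q : ℕ) * φ (g q)
        = (∑ q : Fin (n+1), x ^ (q : ℕ) * φ (ℓ * f q + shf f q))
          - ∑ q : Fin (n+1), x ^ (q : ℕ) * φ (if (q : ℕ) = 0 then w else 0) := by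
      rw [← Finset.sum_sub_distrib]
      refine Finset.sum_congr rfl fun q _ => ?_
      rw [hgdef]; simp only [map_sub]; ring
    rw [hsplit, hLv]
    have hone : ∑ q : Fin (n+1), x ^ (q : ℕ) * φ (if (q : ℕ) = 0 then w else 0)
        = φ w := by
      rw [Finset.sum_eq_single (⟨0, by omega⟩ : Fin (n+1))]
      · simp
      · intro q _ hq
        have : (q : ℕ) ≠ 0 := fun hc => hq (Fin.ext hc)
        rw [if_neg this, map_zero, mul_zero]
      · intro habs; exact absurd (Finset.mem_univ _) habs
    rw [hone, sub_self]
  have hz := hext.decomp_unique (i + 1) g hgmem hgsum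
  have hrel : ∀ q : Fin (n+1), (q : ℕ) ≠ 0 → ℓ * f q + shf f q = 0 := by
    intro q hq
    have := hz q
    rw [hgdef] at this
    simpa [if_neg hq, show q ≠ 0 from fun h => hq (by simp [h])] using this
  have hall := downward_all hd ℓ f hrel
  simp only [Nat.add_sub_cancel] at hall
  have h0 : ℓ * f ⟨0, by omega⟩ = w := by
    have := hz ⟨0, by omega⟩
    have hsh0 : shf f ⟨0, by omega⟩ = 0 := by unfold shf; rw [dif_pos rfl]
    simp only [hgdef, hsh0, add_zero, if_pos] at this
    exact sub_eq_zero.mp this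
  have h00 := hall ⟨0, by omega⟩
  simp only [Nat.sub_zero] at h00
  rw [h00] at h0
  refine ⟨(-1 : B) ^ n * f ⟨n, by omega⟩, ?_, ?_⟩
  · refine neg_one_pow_mem (mem_of_idx_eq ?_ (hf ⟨n, by omega⟩)) n
    push_cast; ring
  · rcases Nat.even_or_odd n with he | ho
    · rw [he.neg_pow] at h0
      rw [he.neg_one_pow, one_mul, pow_succ']
      rw [mul_assoc]
      exact h0
    · rw [ho.neg_pow] at h0
      rw [ho.neg_one_pow, pow_succ']
      linear_combination h0
lemma lem_b (hB : IsStdGradedArtinian k B 𝒜) (hext : IsCIExtension 𝒜 ℬ φ x d)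
    (hd : 1 ≤ d) {ℓ : B} (hℓ : ℓ ∈ 𝒜 1) (i : ℤ)
    (h : MulSurjOnto (𝒜 (i + 1 - d)) (𝒜 (i + 1)) (ℓ ^ d)) :
    MulSurjOnto (ℬ i) (ℬ (i + 1)) (φ ℓ + x) := by
  classical
  obtain ⟨n, rfl⟩ : ∃ n, d = n + 1 := ⟨d - 1, by omega⟩
  intro w hw
  obtain ⟨c, hc, rfl⟩ := hext.decomp_exists (i + 1) w hw
  set cN : ℕ → B := fun q => if hq : q < n + 1 then c ⟨q, hq⟩ else 0 with hcN
  have hcNmem : ∀ q : ℕ, cN q ∈ 𝒜 (i + 1 - q) := by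
    intro q
    rw [hcN]; dsimp only
    split
    · next hq => exact hc ⟨q, hq⟩
    · exact zero_mem _
  have htmem : ((-1 : B) ^ n * ∑ j ∈ Finset.range (n + 1), (-ℓ) ^ j * cN j)
      ∈ 𝒜 (i + 1) := by
    refine neg_one_pow_mem (sum_mem fun j _ => ?_) n
    exact mem_of_idx_eq (by push_cast; ring) (mul_pow_mem hB (neg_mem hℓ) (hcNmem j) j)
  obtain ⟨z, hz, hzt⟩ := h _ htmem
  set f : Fin (n + 1) → B := fun q =>
    (∑ j ∈ Finset.range (n - (q : ℕ)), (-ℓ) ^ j * cN ((q : ℕ) + 1 + j))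
      + (-ℓ) ^ (n - (q : ℕ)) * z with hfdef
  have hfmem : ∀ q : Fin (n + 1), f q ∈ 𝒜 (i - ((q : ℕ) : ℤ)) := by
    intro q
    rw [hfdef]; dsimp only
    refine add_mem (sum_mem fun j _ => ?_) ?_
    · refine mem_of_idx_eq ?_ (mul_pow_mem hB (neg_mem hℓ) (hcNmem ((q : ℕ) + 1 + j)) j)
      push_cast; ring
    · refine mem_of_idx_eq ?_ (mul_pow_mem hB (neg_mem hℓ) hz (n - (q : ℕ)))
      have hq := q.2
      omega
  refine ⟨∑ q : Fin (n + 1), x ^ (q : ℕ) * φ (f q), hext.decomp_mem i f hfmem, ?_⟩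
  rw [key_mul hd φ x hext.x_pow]
  refine Finset.sum_congr rfl fun q _ => ?_
  suffices hs : ℓ * f q + shf f q = c q by rw [hs]
  have hcq : c q = cN (q : ℕ) := by
    rw [hcN]; dsimp only
    rw [dif_pos q.2]
  have hmulS : ∀ (m : ℕ) (a : ℕ),
      ℓ * ∑ j ∈ Finset.range m, (-ℓ) ^ j * cN (a + j)
        = -∑ j ∈ Finset.range m, (-ℓ) ^ (j + 1) * cN (a + j) := by
    intro m a
    rw [Finset.mul_sum, ← Finset.sum_neg_distrib]
    refine Finset.sum_congr rfl fun j _ => ?_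
    rw [pow_succ]; ring
  by_cases h0 : (q : ℕ) = 0
  · unfold shf
    rw [dif_pos h0, add_zero, hcq, h0]
    rw [hfdef]; dsimp only
    rw [h0]
    simp only [Nat.sub_zero, Nat.zero_add]
    have hSig : ∑ j ∈ Finset.range (n + 1), (-ℓ) ^ j * cN j
        = (∑ j ∈ Finset.range n, (-ℓ) ^ (j + 1) * cN (1 + j)) + cN 0 := by
      rw [Finset.sum_range_succ' (fun j => (-ℓ) ^ j * cN j) n]
      simp only [pow_zero, one_mul]
      congr 1
      refine Finset.sum_congr rfl fun j _ => ?_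
      congr 2
      omega
    have h3 := hmulS n 1
    rcases Nat.even_or_odd n with he | ho
    · rw [he.neg_pow ℓ]
      rw [he.neg_one_pow, one_mul] at hzt
      linear_combination h3 + hSig + hzt
    · rw [ho.neg_pow ℓ]
      rw [ho.neg_one_pow, neg_one_mul] at hzt
      linear_combination h3 + hSig - hzt
  · unfold shf
    rw [dif_neg h0, hcq]
    rw [hfdef]; dsimp only
    have e1 : n - ((q : ℕ) - 1) = (n - (q : ℕ)) + 1 := by have := q.2; omega
    rw [e1]
    have h4 : (∑ j ∈ Finset.range ((n - (q : ℕ)) + 1), (-ℓ) ^ j * cN ((q : ℕ) - 1 + 1 + j))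
        = (∑ j ∈ Finset.range (n - (q : ℕ)), (-ℓ) ^ (j + 1) * cN ((q : ℕ) + 1 + j))
          + cN (q : ℕ) := by
      rw [Finset.sum_range_succ' (fun j => (-ℓ) ^ j * cN ((q : ℕ) - 1 + 1 + j)) (n - (q : ℕ))]
      congr 1
      · refine Finset.sum_congr rfl fun j _ => ?_
        congr 2
        omega
      · rw [pow_zero, one_mul]
        congr 1
        omega
    rw [h4]
    have h3 := hmulS (n - (q : ℕ)) ((q : ℕ) + 1)
    set y : B := (-ℓ) ^ (n - (q : ℕ)) with hy
    rw [pow_succ]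
    linear_combination h3
lemma inj0 (hext : IsCIExtension 𝒜 ℬ φ x d) {ℓ : B} (i : ℤ)
    (h : MulInjOn (ℬ i) (φ ℓ)) (q : Fin d) :
    MulInjOn (𝒜 (i - ((q : ℕ) : ℤ))) ℓ := by
  classical
  intro v hv hlv
  set f : Fin d → B := fun r => if r = q then v else 0 with hfdef
  have hf : ∀ r : Fin d, f r ∈ 𝒜 (i - ((r : ℕ) : ℤ)) := by
    intro r
    rw [hfdef]; dsimp only
    split
    · next hr => subst hr; exact hv
    · exact zero_mem _
  have hm := hext.decomp_mem i f hf
  have h0 : φ ℓ * ∑ r : Fin d, x ^ (r : ℕ) * φ (f r) = 0 := by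
    rw [phi_mul]
    apply Finset.sum_eq_zero
    intro r _
    suffices hs : ℓ * f r = 0 by rw [hs, map_zero, mul_zero]
    rw [hfdef]; dsimp only
    split
    · exact hlv
    · exact mul_zero ℓ
  have hz := hext.decomp_unique i f hf (h _ hm h0) q
  simpa [hfdef] using hz

lemma surj0 (hB : IsStdGradedArtinian k B 𝒜) (hext : IsCIExtension 𝒜 ℬ φ x d)
    {ℓ : B} (hℓ : ℓ ∈ 𝒜 1) (i : ℤ)
    (h : MulSurjOnto (ℬ i) (ℬ (i + 1)) (φ ℓ)) (q : Fin d) :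
    MulSurjOnto (𝒜 (i - ((q : ℕ) : ℤ))) (𝒜 (i + 1 - ((q : ℕ) : ℤ))) ℓ := by
  classical
  intro w hw
  set g : Fin d → B := fun r => if r = q then w else 0 with hgdef
  have hg : ∀ r : Fin d, g r ∈ 𝒜 (i + 1 - ((r : ℕ) : ℤ)) := by
    intro r
    rw [hgdef]; dsimp only
    split
    · next hr => subst hr; exact hw
    · exact zero_mem _
  obtain ⟨v, hv, hvw⟩ := h _ (hext.decomp_mem (i + 1) g hg)
  obtain ⟨f, hf, rfl⟩ := hext.decomp_exists i v hv
  rw [phi_mul] at hvw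
  have hmem : ∀ r : Fin d, ℓ * f r - g r ∈ 𝒜 (i + 1 - ((r : ℕ) : ℤ)) := fun r =>
    sub_mem (mem_of_idx_eq (by ring) (hB.mul_mem hℓ (hf r))) (hg r)
  have hsub : ∑ r : Fin d, x ^ (r : ℕ) * φ (ℓ * f r - g r) = 0 := by
    have : ∑ r : Fin d, x ^ (r : ℕ) * φ (ℓ * f r - g r)
        = (∑ r : Fin d, x ^ (r : ℕ) * φ (ℓ * f r))
          - ∑ r : Fin d, x ^ (r : ℕ) * φ (g r) := by
      rw [← Finset.sum_sub_distrib]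
      exact Finset.sum_congr rfl fun r _ => by rw [map_sub]; ring
    rw [this, hvw, sub_self]
  have hz := hext.decomp_unique (i + 1) _ hmem hsub q
  refine ⟨f q, hf q, ?_⟩
  have : g q = w := by rw [hgdef]; dsimp only; rw [if_pos rfl]
  rw [← this]
  exact sub_eq_zero.mp hz

lemma inj_chain (hB : IsStdGradedArtinian k B 𝒜) {ℓ : B} (hℓ : ℓ ∈ 𝒜 1) (j : ℤ) :
    ∀ t : ℕ, (∀ m : ℕ, m < t → MulInjOn (𝒜 (j + m)) ℓ) → MulInjOn (𝒜 j) (ℓ ^ t) := by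
  intro t
  induction t with
  | zero =>
      intro _ v hv h0
      rwa [pow_zero, one_mul] at h0
  | succ t ih =>
      intro h v hv h0
      have hmem : ℓ ^ t * v ∈ 𝒜 (j + t) := mem_of_idx_eq (by ring) (mul_pow_mem hB hℓ hv t)
      have h1 : ℓ * (ℓ ^ t * v) = 0 := by
        rw [← mul_assoc, ← pow_succ']
        exact h0
      exact ih (fun m hm => h m (by omega)) v hv (h t (by omega) _ hmem h1)

lemma surj_chain (hB : IsStdGradedArtinian k B 𝒜) {ℓ : B} (hℓ : ℓ ∈ 𝒜 1) (j : ℤ) :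
    ∀ t : ℕ, (∀ m : ℕ, m < t → MulSurjOnto (𝒜 (j + m)) (𝒜 (j + m + 1)) ℓ) →
      MulSurjOnto (𝒜 j) (𝒜 (j + t)) (ℓ ^ t) := by
  intro t
  induction t with
  | zero =>
      intro _ w hw
      exact ⟨w, mem_of_idx_eq (by push_cast; ring) hw, by rw [pow_zero, one_mul]⟩
  | succ t ih =>
      intro h w hw
      have hw' : w ∈ 𝒜 (j + t + 1) := mem_of_idx_eq (by push_cast; ring) hw
      obtain ⟨u, hu, hu1⟩ := h t (by omega) w hw'
      obtain ⟨v, hv, hv1⟩ := ih (fun m hm => h m (by omega)) u hu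
      exact ⟨v, hv, by rw [pow_succ', mul_assoc, hv1, hu1]⟩

lemma decompL (hB : IsStdGradedArtinian k B 𝒜) (hext : IsCIExtension 𝒜 ℬ φ x d)
    (hd : 1 ≤ d) {L : A} (hL : L ∈ ℬ 1) :
    ∃ ℓ₀ ∈ 𝒜 1, ∃ c : k, L = φ ℓ₀ + c • x := by
  classical
  obtain ⟨f, hf, rfl⟩ := hext.decomp_exists 1 L hL
  refine ⟨f ⟨0, hd⟩, by simpa using hf ⟨0, hd⟩, ?_⟩
  by_cases hd2 : 2 ≤ d
  · have h1 : f ⟨1, hd2⟩ ∈ 𝒜 0 := by simpa using hf ⟨1, hd2⟩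
    rw [hB.zero_spanOne] at h1
    obtain ⟨c, hc⟩ := Submodule.mem_span_singleton.mp h1
    refine ⟨c, ?_⟩
    have hterm : ∀ q : Fin d, x ^ (q : ℕ) * φ (f q)
        = (if q = ⟨0, hd⟩ then φ (f ⟨0, hd⟩) else 0)
          + (if q = ⟨1, hd2⟩ then c • x else 0) := by
      intro q
      by_cases hq0 : q = ⟨0, hd⟩
      · subst hq0
        rw [if_pos rfl, if_neg (by simp), add_zero, pow_zero, one_mul]
      · by_cases hq1 : q = ⟨1, hd2⟩
        · subst hq1
          rw [if_neg hq0, if_pos rfl, zero_add, pow_one, ← hc, map_smul, map_one,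
            mul_smul_comm, mul_one]
        · have hn0 : (q : ℕ) ≠ 0 := fun hcc => hq0 (Fin.ext hcc)
          have hn1 : (q : ℕ) ≠ 1 := fun hcc => hq1 (Fin.ext hcc)
          have hfq : f q = 0 := by
            have := hf q
            rw [hB.neg_bot _ (by omega)] at this
            simpa using this
          rw [if_neg hq0, if_neg hq1, hfq, map_zero, mul_zero, add_zero]
    rw [Finset.sum_congr rfl fun q _ => hterm q, Finset.sum_add_distrib,
      Finset.sum_ite_eq' Finset.univ, Finset.sum_ite_eq' Finset.univ]
    simp
  · have hd1 : d = 1 := by omega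
    subst hd1
    have hx0 : x = 0 := by
      have := hext.x_pow
      rwa [pow_one] at this
    refine ⟨0, ?_⟩
    rw [zero_smul, add_zero]
    simp
end Aux

/-- Let `k` be an infinite field, `B` a standard graded artinian
`k`-algebra and `A = B ⊗ₖ k[x]/(x^d)` for some `d ≥ 1`.  Then `A` has the weak Lefschetz
property if and only if there is a linear form `ℓ ∈ B₁` such that `·ℓ^d : B_i → B_{i+d}`
has full rank for every `i ≥ 0`. -/
theorem statement_12 {k B A : Type} [Field k] [Infinite k]
    [CommRing B] [Algebra k B] [CommRing A] [Algebra k A]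
    (𝒜 : ℤ → Submodule k B) (ℬ : ℤ → Submodule k A)
    (hB : IsStdGradedArtinian k B 𝒜) (hA : IsStdGradedArtinian k A ℬ)
    (d : ℕ) (hd : 1 ≤ d) (φ : B →ₐ[k] A) (x : A)
    (hext : IsCIExtension 𝒜 ℬ φ x d) :
    HasWLP ℬ ↔ ∃ ℓ ∈ 𝒜 1, ∀ i : ℤ, 0 ≤ i → MulFullRank (𝒜 i) (𝒜 (i + d)) (ℓ ^ d) := by
  have hdz : (1 : ℤ) ≤ (d : ℤ) := by exact_mod_cast hd
  constructor
  · rintro ⟨L, hL1, hLfr⟩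
    obtain ⟨ℓ₀, hℓ₀, c, rfl⟩ := decompL hB hext hd hL1
    by_cases hc : c = 0
    · subst hc
      rw [zero_smul, add_zero] at hL1 hLfr
      refine ⟨ℓ₀, hℓ₀, ?_⟩
      intro j hj
      have hi : (0 : ℤ) ≤ j + d - 1 := by omega
      rcases hLfr (j + d - 1) hi with hinj | hsurj
      · left
        refine inj_chain hB hℓ₀ j d ?_
        intro m hm
        have h1 := inj0 hext (j + d - 1) hinj ⟨d - 1 - m, by omega⟩
        have heq : (j + d - 1) - (((d - 1 - m : ℕ) : ℕ) : ℤ) = j + m := by omega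
        rwa [heq] at h1
      · right
        refine surj_chain hB hℓ₀ j d ?_
        intro m hm
        have h1 := surj0 hB hext hℓ₀ (j + d - 1) hsurj ⟨d - 1 - m, by omega⟩
        have heq : (j + d - 1) - (((d - 1 - m : ℕ) : ℕ) : ℤ) = j + m := by omega
        have heq2 : (j + d - 1) + 1 - (((d - 1 - m : ℕ) : ℕ) : ℤ) = j + m + 1 := by omega
        rwa [heq, heq2] at h1
    · refine ⟨c⁻¹ • ℓ₀, Submodule.smul_mem _ _ hℓ₀, ?_⟩
      intro j hj
      have hi : (0 : ℤ) ≤ j + d - 1 := by omega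
      have hfr := fullrank_smul (inv_ne_zero hc) (hLfr (j + d - 1) hi)
      have hLs : c⁻¹ • (φ ℓ₀ + c • x) = φ (c⁻¹ • ℓ₀) + x := by
        rw [smul_add, map_smul, smul_smul, inv_mul_cancel₀ hc, one_smul]
      rw [hLs] at hfr
      have hℓ : c⁻¹ • ℓ₀ ∈ 𝒜 1 := Submodule.smul_mem _ _ hℓ₀
      rcases hfr with hinj | hsurj
      · left
        have h1 := lem_c hB hext hd hℓ (j + d - 1) hinj
        have heq : (j + d - 1) + 1 - (d : ℤ) = j := by omega
        rwa [heq] at h1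
      · right
        have h1 := lem_d hB hext hd hℓ (j + d - 1) hsurj
        have heq : (j + d - 1) + 1 - (d : ℤ) = j := by omega
        have heq2 : (j + d - 1) + 1 = j + d := by omega
        rwa [heq, heq2] at h1
  · rintro ⟨ℓ, hℓ, hfr⟩
    refine ⟨φ ℓ + x, add_mem (hext.map_mem 1 ℓ hℓ) hext.x_mem, ?_⟩
    intro i hi
    by_cases hneg : i + 1 - d < 0
    · left
      refine lem_a hB hext hd hℓ i ?_
      intro v hv _
      rw [hB.neg_bot _ hneg] at hv
      simpa using hv
    · push_neg at hneg
      rcases hfr (i + 1 - d) hneg with hinj | hsurj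
      · exact Or.inl (lem_a hB hext hd hℓ i hinj)
      · right
        have heq : (i + 1 - d) + (d : ℤ) = i + 1 := by omega
        rw [heq] at hsurj
        exact lem_b hB hext hd hℓ i hsurj
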